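/- Let μ₁, μ₂ be finite nonnegative measures on [0,τ] with continuous, strictly positive densities λ₁, λ₂ with respect to Lebesgue measure. If for a random vector a ~ N(m, V) (V positive definite) and measurable bounded functions u₁(t), u₂(t), one has exp(u₁(t)ᵀa)λ₁(t) = exp(u₂(t)ᵀa)λ₂(t) for almost every t and almost every a, then u₁(t) = u₂(t) and λ₁(t) = λ₂(t) for almost every t. -/
import Mathlib


open MeasureTheory Real Matrix

lemma cont_dot (u : Fin d → ℝ) : Continuous (fun a : Fin d → ℝ => dotProduct u a) := by
  unfold dotProduct
  exact continuous_finset_sum _ (fun i _ => (continuous_const.mul (continuous_apply i)))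

/-- Identifiability step: if `a ~ N(m, V)` with `V` positive definite and, for a.e. `t`
in `[0,τ]` and a.e. `a`, `exp(u₁(t)ᵀa) l₁(t) = exp(u₂(t)ᵀa) l₂(t)` with `λᵢ` continuous
and strictly positive densities and `uᵢ` bounded measurable, then `u₁(t) = u₂(t)` and
`l₁(t) = l₂(t)` for almost every `t ∈ [0,τ]`. -/
theorem identifiability_of_hazard (d : ℕ) (τ : ℝ) (hτ : 0 < τ)
    (m : Fin d → ℝ) (V : Matrix (Fin d) (Fin d) ℝ) (hV : V.PosDef)
    (μ : Measure (Fin d → ℝ))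
    (hμ : μ = volume.withDensity (fun a =>
      ENNReal.ofReal ((2 * π) ^ (-(d : ℝ) / 2) * V.det ^ (-(1 : ℝ) / 2) *
        Real.exp (-(dotProduct (a - m) (V⁻¹.mulVec (a - m))) / 2))))
    (l₁ l₂ : ℝ → ℝ)
    (hl₁cont : ContinuousOn l₁ (Set.Icc 0 τ)) (hl₂cont : ContinuousOn l₂ (Set.Icc 0 τ))
    (hl₁pos : ∀ t ∈ Set.Icc 0 τ, 0 < l₁ t) (hl₂pos : ∀ t ∈ Set.Icc 0 τ, 0 < l₂ t)
    (u₁ u₂ : ℝ → (Fin d → ℝ))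
    (hu₁ : Measurable u₁) (hu₂ : Measurable u₂)
    (hu₁bd : ∃ M, ∀ t, ‖u₁ t‖ ≤ M) (hu₂bd : ∃ M, ∀ t, ‖u₂ t‖ ≤ M)
    (heq : ∀ᵐ t ∂(volume.restrict (Set.Icc 0 τ)), ∀ᵐ a ∂μ,
      Real.exp (dotProduct (u₁ t) a) * l₁ t = Real.exp (dotProduct (u₂ t) a) * l₂ t) :
    ∀ᵐ t ∂(volume.restrict (Set.Icc 0 τ)), u₁ t = u₂ t ∧ l₁ t = l₂ t := by
  subst hμ
  set f : (Fin d → ℝ) → ℝ := fun a =>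
      (2 * π) ^ (-(d : ℝ) / 2) * V.det ^ (-(1 : ℝ) / 2) *
        Real.exp (-(dotProduct (a - m) (V⁻¹.mulVec (a - m))) / 2) with hf
  have hfpos : ∀ a, 0 < f a := by
    intro a
    have h1 : (0:ℝ) < (2 * π) ^ (-(d : ℝ) / 2) :=
      Real.rpow_pos_of_pos (by positivity) _
    have h2 : (0:ℝ) < V.det ^ (-(1 : ℝ) / 2) := Real.rpow_pos_of_pos hV.det_pos _
    positivity
  have hfcont : Continuous f := by
    apply Continuous.mul continuous_const
    apply Real.continuous_exp.comp
    apply Continuous.div_const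
    apply Continuous.neg
    unfold dotProduct Matrix.mulVec
    apply continuous_finset_sum
    intro i _
    apply Continuous.mul
    · exact (continuous_apply i).sub continuous_const
    · unfold dotProduct
      apply continuous_finset_sum
      intro j _
      exact continuous_const.mul ((continuous_apply j).sub continuous_const)
  have hfmeas : Measurable (fun a => ENNReal.ofReal (f a)) :=
    (ENNReal.measurable_ofReal.comp hfcont.measurable)
  filter_upwards [heq, ae_restrict_mem measurableSet_Icc] with t ht htmem
  -- translate μ-a.e. to volume-a.e.
  have ht' : ∀ᵐ a : Fin d → ℝ,
      Real.exp (dotProduct (u₁ t) a) * l₁ t = Real.exp (dotProduct (u₂ t) a) * l₂ t := by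
    rw [ae_withDensity_iff hfmeas] at ht
    filter_upwards [ht] with a ha
    exact ha (ne_of_gt (ENNReal.ofReal_pos.2 (hfpos a)))
  -- continuous functions a.e. equal are equal
  have hall : ∀ a : Fin d → ℝ,
      Real.exp (dotProduct (u₁ t) a) * l₁ t = Real.exp (dotProduct (u₂ t) a) * l₂ t := by
    have hcont1 : Continuous (fun a : Fin d → ℝ => Real.exp (dotProduct (u₁ t) a) * l₁ t) :=
      (Real.continuous_exp.comp (cont_dot _)).mul continuous_const
    have hcont2 : Continuous (fun a : Fin d → ℝ => Real.exp (dotProduct (u₂ t) a) * l₂ t) :=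
      (Real.continuous_exp.comp (cont_dot _)).mul continuous_const
    have := (Continuous.ae_eq_iff_eq volume hcont1 hcont2).1 ht'
    intro a; exact congrFun this a
  have hl : l₁ t = l₂ t := by
    have := hall 0
    simpa using this
  have hexp : ∀ a, Real.exp (dotProduct (u₁ t) a) = Real.exp (dotProduct (u₂ t) a) := by
    intro a
    have h := hall a
    rw [hl] at h
    exact mul_right_cancel₀ (ne_of_gt (hl₂pos t htmem)) h
  have hdot : ∀ a, dotProduct (u₁ t) a = dotProduct (u₂ t) a := fun a =>
    Real.exp_injective (hexp a)
  refine ⟨funext fun i => ?_, hl⟩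
  have := hdot (Pi.single i 1)
  simpa [dotProduct_single] using this
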